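/- Let V be an algebraic gradient on a based chain complex with elementwise filtration refining the sublevel-set filtration of the algebraic Morse function of V. Then the set of gradient cofacet boundaries {∂b : (a,b) ∈ V, a ∈ Σ_n} is linearly independent, and the canonical projection onto the span of the gradient facets of degree n (with respect to the basis Σ_n) is an isomorphism onto its image space. -/

import Mathlib

open Classical Finset

noncomputable section

variable {𝕜 : Type} [Field 𝕜] {l : ℕ}

/-- The support of a coordinate vector: the set of basis indices with nonzero coefficient. -/
def vsupp (c : Fin l → 𝕜) : Finset (Fin l) :=
  Finset.univ.filter (fun i => c i ≠ 0)

/-- The pivot of a coordinate vector: the maximal index of its support (`⊥` if zero). -/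
def vpivot (c : Fin l → 𝕜) : WithBot (Fin l) := (vsupp c).max

/-- The lexicographic order on finite subsets of a totally ordered set. -/
def finsetLexLe {α : Type*} [LinearOrder α] (A B : Finset α) : Prop :=
  A = B ∨ ∃ h : ((A \ B) ∪ (B \ A)).Nonempty, ((A \ B) ∪ (B \ A)).max' h ∈ B

/-- The lexicographic preorder on chains, comparing supports lexicographically. -/
def chainLexLe (c₁ c₂ : Fin l → 𝕜) : Prop := finsetLexLe (vsupp c₁) (vsupp c₂)

/-- The strict lexicographic preorder on chains. -/
def chainLexLt (c₁ c₂ : Fin l → 𝕜) : Prop :=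
  chainLexLe c₁ c₂ ∧ vsupp c₁ ≠ vsupp c₂

/-- A basis element is critical if it is contained in no pair of `V`. -/
def CriticalIn {l : ℕ} (V : Finset (Fin l × Fin l)) (a : Fin l) : Prop :=
  ∀ p ∈ V, p.1 ≠ a ∧ p.2 ≠ a

/-- A based chain complex with an elementwise filtration: the basis elements are
`σ_1 < … < σ_l` (indexed by `Fin l`), `deg` records their homological degree, and `D` is the
filtration boundary matrix (the column `D _ j` represents `∂σ_j`).  Monotonicity `filt`
expresses that the down sets of the filtration order span subcomplexes, `homog` that the
boundary map decreases degree by one, and `dd` that `∂ ∘ ∂ = 0`. -/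
structure BasedChainComplex (𝕜 : Type) [Field 𝕜] (l : ℕ) where
  deg : Fin l → ℕ
  D : Matrix (Fin l) (Fin l) 𝕜
  homog : ∀ i j, D i j ≠ 0 → deg i + 1 = deg j
  filt : ∀ i j, D i j ≠ 0 → i < j
  dd : D * D = 0

namespace BasedChainComplex

variable (C : BasedChainComplex 𝕜 l)

/-- `σ_i` is a facet of `σ_j` if `⟨∂σ_j, σ_i⟩ ≠ 0`. -/
def IsFacet (i j : Fin l) : Prop := C.D i j ≠ 0

/-- An algebraic gradient: a disjoint collection `V` of facet pairs arising from an
algebraic Morse function, i.e. a monotonic function `f` on the basis such that a facet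
pair `(μ, η)` satisfies `f μ = f η` iff `(μ, η) ∈ V`. -/
def IsAlgGradient (V : Finset (Fin l × Fin l)) : Prop :=
  (∀ p ∈ V, C.IsFacet p.1 p.2) ∧
  (∀ p ∈ V, ∀ q ∈ V, p ≠ q → p.1 ≠ q.1 ∧ p.1 ≠ q.2 ∧ p.2 ≠ q.1 ∧ p.2 ≠ q.2) ∧
  (∃ f : Fin l → ℝ, (∀ i j, C.IsFacet i j → f i ≤ f j) ∧
    (∀ i j, C.IsFacet i j → (f i = f j ↔ (i, j) ∈ V)))

/-- The chain homotopy `F` of an algebraic gradient `V`: the linear map with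
`F σ = −⟨∂τ, σ⟩⁻¹ · τ` if `(σ, τ) ∈ V` and `F σ = 0` otherwise. -/
def Fmap (V : Finset (Fin l × Fin l)) (c : Fin l → 𝕜) : Fin l → 𝕜 :=
  fun j => ∑ i, (if (i, j) ∈ V then -(C.D i j)⁻¹ else 0) * c i

/-- The flow of an algebraic gradient `V`: `Φ(c) = c + ∂F(c) + F(∂c)`. -/
def flow (V : Finset (Fin l × Fin l)) (c : Fin l → 𝕜) : Fin l → 𝕜 :=
  c + C.D.mulVec (C.Fmap V c) + C.Fmap V (C.D.mulVec c)

/-- A cycle of degree `n`: a chain with `∂z = 0` supported in degree `n`. -/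
def IsCycle (n : ℕ) (z : Fin l → 𝕜) : Prop :=
  C.D.mulVec z = 0 ∧ ∀ i, z i ≠ 0 → C.deg i = n

/-- `V` is `n`-reduced: for every pair `(a, b) ∈ V` with `a` of degree `n`,
the pivot of `∂b` equals `a`. -/
def NReduced (V : Finset (Fin l × Fin l)) (n : ℕ) : Prop :=
  ∀ p ∈ V, C.deg p.1 = n → vpivot (fun i => C.D i p.2) = (p.1 : WithBot (Fin l))

/-- `V` generates the `n`-boundaries: the gradient cofacet boundaries
`{∂b : (a,b) ∈ V, deg a = n}` span the space of boundaries of degree `n`. -/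
def GeneratesBoundaries (V : Finset (Fin l × Fin l)) (n : ℕ) : Prop :=
  ∀ e : Fin l → 𝕜, (∀ i, e i ≠ 0 → C.deg i = n + 1) →
    C.D.mulVec e ∈ Submodule.span 𝕜
      {x : Fin l → 𝕜 | ∃ p ∈ V, C.deg p.1 = n ∧ x = fun i => C.D i p.2}

/-- A chain is lexicographically minimal if no homologous chain is strictly smaller
in the lexicographic preorder. -/
def LexMinimal (z : Fin l → 𝕜) : Prop :=
  ∀ e : Fin l → 𝕜, ¬ chainLexLt (z + C.D.mulVec e) z

end BasedChainComplex

end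

open Classical in
/-- The pivot of a gradient cofacet boundary: for `(a,b) ∈ V`, `a` is the maximal
element of the support of `∂b`. -/
lemma pivot_aux {𝕜 : Type} [Field 𝕜] {l : ℕ} (C : BasedChainComplex 𝕜 l)
    (V : Finset (Fin l × Fin l)) (hV : C.IsAlgGradient V)
    (f : Fin l → ℝ)
    (hmono : ∀ i j, C.IsFacet i j → f i ≤ f j)
    (heq : ∀ i j, C.IsFacet i j → (f i = f j ↔ (i, j) ∈ V))
    (hrefine : Monotone f) {p : Fin l × Fin l} (hp : p ∈ V) :
    C.D p.1 p.2 ≠ 0 ∧ ∀ i, C.D i p.2 ≠ 0 → i ≤ p.1 := by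
  have hfac : C.IsFacet p.1 p.2 := hV.1 p hp
  refine ⟨hfac, fun i hi => ?_⟩
  by_contra hlt
  push_neg at hlt
  have h1 : f p.1 = f p.2 := (heq _ _ hfac).mpr hp
  have h2 : f i ≤ f p.2 := hmono i p.2 hi
  have h3 : f p.1 ≤ f i := hrefine hlt.le
  have h4 : f i = f p.2 := le_antisymm h2 (h1 ▸ h3)
  have h5 : (i, p.2) ∈ V := (heq i p.2 hi).mp h4
  have hne : p ≠ (i, p.2) := by
    intro h
    exact absurd (congrArg Prod.fst h) hlt.ne
  exact (hV.2.1 p hp (i, p.2) h5 hne).2.2.2 rfl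

/-- A family of vectors with pairwise distinct pivots is linearly independent. -/
lemma li_pivots {𝕜 : Type} [Field 𝕜] {l : ℕ} {ι : Type*} (u : ι → Fin l → 𝕜)
    (a : ι → Fin l) (hinj : Function.Injective a) (hne : ∀ i, u i (a i) ≠ 0)
    (hle : ∀ i j, u i j ≠ 0 → j ≤ a i) : LinearIndependent 𝕜 u := by
  rw [linearIndependent_iff']
  intro s g hsum i hi
  by_contra hgi
  classical
  set T := s.filter (fun j => g j ≠ 0) with hTdef
  have hT : T.Nonempty := ⟨i, Finset.mem_filter.2 ⟨hi, hgi⟩⟩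
  obtain ⟨j, hjT, hjmax⟩ := T.exists_max_image a hT
  have hj := Finset.mem_filter.1 hjT
  have hzero := congrFun hsum (a j)
  rw [Finset.sum_apply] at hzero
  have hsingle : ∑ k ∈ s, (g k • u k) (a j) = g j * u j (a j) := by
    rw [Finset.sum_eq_single j]
    · simp [smul_eq_mul]
    · intro k hk hkj
      by_cases hgk : g k = 0
      · simp [hgk]
      · by_cases huk : u k (a j) = 0
        · simp [huk]
        · have h1 : a j ≤ a k := hle k (a j) huk
          have h2 : a k ≤ a j := hjmax k (Finset.mem_filter.2 ⟨hk, hgk⟩)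
          exact absurd (hinj (le_antisymm h2 h1)) hkj
    · intro h
      exact absurd hj.1 h
  rw [hsingle] at hzero
  rcases mul_eq_zero.1 hzero with h | h
  · exact hj.2 h
  · exact hne j h

open Classical in
/-- For an algebraic gradient `V` of an algebraic Morse function `f` on a based chain
complex whose elementwise filtration refines the sublevel-set filtration of `f`
(`f` is monotone in the filtration order), the set of gradient cofacet boundaries
`{∂b : (a,b) ∈ V, a ∈ Σ_n}` is linearly independent, and the canonical projection onto
the span of the degree-`n` gradient facets is an isomorphism onto it (injective on the
span of the gradient cofacet boundaries, with image the span of the gradient facets). -/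
theorem stmt12 {𝕜 : Type} [Field 𝕜] {l : ℕ} (C : BasedChainComplex 𝕜 l)
    (V : Finset (Fin l × Fin l)) (hV : C.IsAlgGradient V)
    (f : Fin l → ℝ)
    (hmono : ∀ i j, C.IsFacet i j → f i ≤ f j)
    (heq : ∀ i j, C.IsFacet i j → (f i = f j ↔ (i, j) ∈ V))
    (hrefine : Monotone f) (n : ℕ) :
    LinearIndependent 𝕜
      (fun p : {p : Fin l × Fin l // p ∈ V ∧ C.deg p.1 = n} =>
        (fun i => C.D i p.1.2 : Fin l → 𝕜)) ∧
    Set.InjOn (fun c : Fin l → 𝕜 => (fun i => if ∃ b, (i, b) ∈ V then c i else 0))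
      ↑(Submodule.span 𝕜
        {x : Fin l → 𝕜 | ∃ p ∈ V, C.deg p.1 = n ∧ x = fun i => C.D i p.2}) ∧
    (fun c : Fin l → 𝕜 => (fun i => if ∃ b, (i, b) ∈ V then c i else 0)) ''
        ↑(Submodule.span 𝕜
          {x : Fin l → 𝕜 | ∃ p ∈ V, C.deg p.1 = n ∧ x = fun i => C.D i p.2}) =
      ↑(Submodule.span 𝕜
        {x : Fin l → 𝕜 | ∃ p ∈ V, C.deg p.1 = n ∧ x = Pi.single p.1 (1 : 𝕜)}) := by
  classical
  set P := {p : Fin l × Fin l // p ∈ V ∧ C.deg p.1 = n} with hP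
  haveI : Fintype P := Fintype.ofFinite _
  set a : P → Fin l := fun p => p.1.1 with ha
  set v : P → Fin l → 𝕜 := fun p i => C.D i p.1.2 with hv
  set π : (Fin l → 𝕜) →ₗ[𝕜] (Fin l → 𝕜) :=
    { toFun := fun c => fun i => if ∃ b, (i, b) ∈ V then c i else 0
      map_add' := by
        intro x y
        funext i
        by_cases h : ∃ b, (i, b) ∈ V <;> simp [h]
      map_smul' := by
        intro r x
        funext i
        by_cases h : ∃ b, (i, b) ∈ V <;> simp [h] } with hπ
  set w : P → Fin l → 𝕜 := fun p => π (v p) with hw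
  set s : P → Fin l → 𝕜 := fun p => Pi.single (a p) (1 : 𝕜) with hs
  -- injectivity of the gradient-facet map
  have hainj : Function.Injective a := by
    intro p q h
    by_contra hpq
    have hne : p.1 ≠ q.1 := fun h' => hpq (Subtype.ext h')
    exact (hV.2.1 p.1 p.2.1 q.1 q.2.1 hne).1 h
  -- pivot facts
  have hpiv := fun p : P => pivot_aux C V hV f hmono heq hrefine p.2.1
  have hDne : ∀ p : P, C.D p.1.1 p.1.2 ≠ 0 := fun p => (hpiv p).1
  have hexa : ∀ p : P, ∃ b, (a p, b) ∈ V := fun p => ⟨p.1.2, p.2.1⟩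
  have hwv : ∀ p : P, w p (a p) = C.D p.1.1 p.1.2 := by
    intro p
    simp only [hw, hπ, hv, LinearMap.coe_mk, AddHom.coe_mk, if_pos (hexa p)]
    rfl
  have hwne : ∀ p : P, w p (a p) ≠ 0 := fun p => (hwv p) ▸ hDne p
  have hwle : ∀ (p : P) (j : Fin l), w p j ≠ 0 → j ≤ a p := by
    intro p j hj
    apply (hpiv p).2 j
    intro h0
    apply hj
    simp only [hw, hπ, hv, LinearMap.coe_mk, AddHom.coe_mk, h0]
    split <;> rfl
  have hwv' : ∀ (p : P) (j : Fin l), w p j ≠ 0 → v p j ≠ 0 := by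
    intro p j hj h0
    apply hj
    simp only [hw, hπ, LinearMap.coe_mk, AddHom.coe_mk, h0]
    split <;> rfl
  -- linear independence of the three families
  have hliv : LinearIndependent 𝕜 v :=
    li_pivots v a hainj (fun p => hDne p) (fun p j hj => (hpiv p).2 j hj)
  have hliw : LinearIndependent 𝕜 w := li_pivots w a hainj hwne hwle
  have hlis : LinearIndependent 𝕜 s := by
    apply li_pivots s a hainj
    · intro p
      simp [hs]
    · intro p j hj
      by_contra hgt
      exact hj (Pi.single_eq_of_ne (fun h => hgt (le_of_eq h)) 1)
  -- identification of the generating sets with ranges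
  have hS : {x : Fin l → 𝕜 | ∃ p ∈ V, C.deg p.1 = n ∧ x = fun i => C.D i p.2} =
      Set.range v := by
    ext x
    constructor
    · rintro ⟨p, hpV, hdeg, rfl⟩
      exact ⟨⟨p, hpV, hdeg⟩, rfl⟩
    · rintro ⟨p, rfl⟩
      exact ⟨p.1, p.2.1, p.2.2, rfl⟩
  have hS' : {x : Fin l → 𝕜 | ∃ p ∈ V, C.deg p.1 = n ∧ x = Pi.single p.1 (1 : 𝕜)} =
      Set.range s := by
    ext x
    constructor
    · rintro ⟨p, hpV, hdeg, rfl⟩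
      exact ⟨⟨p, hpV, hdeg⟩, rfl⟩
    · rintro ⟨p, rfl⟩
      exact ⟨p.1, p.2.1, p.2.2, rfl⟩
  -- span of the projected boundaries equals span of the facet singletons
  have hspan : Submodule.span 𝕜 (Set.range w) = Submodule.span 𝕜 (Set.range s) := by
    have hle' : Submodule.span 𝕜 (Set.range w) ≤ Submodule.span 𝕜 (Set.range s) := by
      rw [Submodule.span_le]
      rintro _ ⟨p, rfl⟩
      have hrepr : w p = ∑ i, Pi.single i (w p i) := (Finset.univ_sum_single (w p)).symm
      rw [hrepr]
      apply Submodule.sum_mem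
      intro i _
      by_cases h0 : w p i = 0
      · simp [h0]
      · have hiv : v p i ≠ 0 := hwv' p i h0
        have hdegi : C.deg i = n := by
          have h1 := C.homog i p.1.2 hiv
          have h2 := C.homog p.1.1 p.1.2 (hDne p)
          have h3 := p.2.2
          omega
        have hex : ∃ b, (i, b) ∈ V := by
          by_contra hb
          apply h0
          simp only [hw, hπ, LinearMap.coe_mk, AddHom.coe_mk, if_neg hb]
        obtain ⟨b, hb⟩ := hex
        have hsingle : (Pi.single i (w p i) : Fin l → 𝕜) = (w p i) • (Pi.single i (1 : 𝕜) : Fin l → 𝕜) := by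
          funext j
          by_cases hji : j = i
          · subst hji; simp
          · simp [Pi.single_eq_of_ne hji]
        rw [hsingle]
        exact Submodule.smul_mem _ _
          (Submodule.subset_span ⟨⟨(i, b), hb, hdegi⟩, rfl⟩)
    haveI : FiniteDimensional 𝕜 ↥(Submodule.span 𝕜 (Set.range s)) :=
      FiniteDimensional.finiteDimensional_submodule _
    apply Submodule.eq_of_le_of_finrank_le hle'
    rw [finrank_span_eq_card hlis, finrank_span_eq_card hliw]
  -- the projection of the boundary span as a submodule
  have himg : ⇑π '' Set.range v = Set.range w := by
    rw [← Set.range_comp]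
    rfl
  have key : Submodule.map π (Submodule.span 𝕜 (Set.range v)) =
      Submodule.span 𝕜 (Set.range s) := by
    rw [Submodule.map_span, himg, hspan]
  refine ⟨hliv, ?_, ?_⟩
  · -- injectivity on the span
    intro x hx y hy hxy
    rw [SetLike.mem_coe, hS] at hx hy
    obtain ⟨c, hc⟩ := (Submodule.mem_span_range_iff_exists_fun 𝕜).1 hx
    obtain ⟨d, hd⟩ := (Submodule.mem_span_range_iff_exists_fun 𝕜).1 hy
    have hπxy : π x = π y := hxy
    have hπx : π x = ∑ p, c p • w p := by
      rw [← hc, map_sum]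
      simp [hw]
    have hπy : π y = ∑ p, d p • w p := by
      rw [← hd, map_sum]
      simp [hw]
    have h0 : ∑ p, (c p - d p) • w p = 0 := by
      simp only [sub_smul, Finset.sum_sub_distrib, ← hπx, ← hπy, hπxy, sub_self]
    have hcd : ∀ p, c p - d p = 0 := Fintype.linearIndependent_iff.1 hliw _ h0
    have hcd' : c = d := funext fun p => sub_eq_zero.1 (hcd p)
    rw [← hc, ← hd, hcd']
  · -- image of the span
    rw [hS, hS']
    calc (fun c : Fin l → 𝕜 => (fun i => if ∃ b, (i, b) ∈ V then c i else 0)) ''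
          ↑(Submodule.span 𝕜 (Set.range v))
        = ⇑π '' ↑(Submodule.span 𝕜 (Set.range v)) := rfl
      _ = ↑(Submodule.map π (Submodule.span 𝕜 (Set.range v))) :=
          (Submodule.map_coe π _).symm
      _ = ↑(Submodule.span 𝕜 (Set.range s)) := by rw [key]
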